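/- arXiv:0906.3145 — 4 statements merged into one kernel-verified Lean document; each statement's English description precedes it below -/
import Mathlib

section
/- Let A be a finite-dimensional local self-injective k-algebra whose socle (as a left A-module, equal to the socle of A as a bimodule) is one-dimensional, spanned by an element u, and assume every projective A-module is free. If M is a finitely generated A-module with dim_k(uM) = r, then M is isomorphic to A^r ⊕ N where N is an A-module with uN = 0 (in particular, N has no projective submodules). -/
section Aux

variable {A : Type} [Ring A] [IsLocalRing A]

/-- In a (possibly noncommutative) local ring, a left factor of a unit is a unit. -/
lemma aux_isUnit_of_mul {y x : A} (h : IsUnit (y * x)) : IsUnit x := by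
  obtain ⟨t, ht⟩ := h
  set w : A := (↑t⁻¹ : A) * y with hw
  have hwx : w * x = 1 := by
    rw [hw, mul_assoc, ← ht]; exact t.inv_mul
  rcases IsLocalRing.isUnit_or_isUnit_of_add_one
      (a := x * w) (b := 1 - x * w) (by abel) with h1 | h2
  · obtain ⟨s, hs⟩ := h1
    have hxr : x * (w * (↑s⁻¹ : A)) = 1 := by
      rw [← mul_assoc, ← hs]; exact s.mul_inv
    have hwr : w = w * (↑s⁻¹ : A) := by
      conv_lhs => rw [← mul_one w, ← hxr, ← mul_assoc, ← mul_assoc, hwx, one_mul]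
    exact ⟨⟨x, w, by rw [hwr] at hwx ⊢; rw [← mul_assoc] at hxr ⊢; exact hxr, hwx⟩, rfl⟩
  · obtain ⟨s, hs⟩ := h2
    have hx0 : x = 0 := by
      have h0 : (↑s : A) * x = 0 := by
        rw [hs, sub_mul, one_mul, mul_assoc, hwx, mul_one, sub_self]
      calc x = (↑s⁻¹ : A) * ((↑s : A) * x) := by
                rw [← mul_assoc, ← Units.val_mul, inv_mul_cancel, Units.val_one, one_mul]
        _ = 0 := by rw [h0, mul_zero]
    exfalso
    apply one_ne_zero (α := A)
    rw [← hwx, hx0, mul_zero]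

lemma aux_isUnit_one_sub {x : A} (h : ¬ IsUnit x) : IsUnit (1 - x) :=
  (IsLocalRing.isUnit_or_isUnit_of_add_one (a := x) (b := 1 - x) (by abel)).resolve_left h

variable {k : Type} [Field k] [Algebra k A]

/-- Every nonzero element of a finite-dimensional module over a local algebra
generates a cyclic submodule containing a nonzero element of the socle. -/
lemma aux_socle (V : Type) [AddCommGroup V] [Module A V] [Module k V]
    [IsScalarTower k A V] [FiniteDimensional k V] :
    ∀ a : V, a ≠ 0 → ∃ b ∈ Submodule.span A {a}, b ≠ 0 ∧
      ∀ x : A, ¬ IsUnit x → x • b = 0 := by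
  suffices H : ∀ n : ℕ, ∀ a : V, a ≠ 0 →
      Module.finrank k ((Submodule.span A {a}).restrictScalars k) ≤ n →
      ∃ b ∈ Submodule.span A {a}, b ≠ 0 ∧ ∀ x : A, ¬ IsUnit x → x • b = 0 by
    exact fun a ha => H _ a ha le_rfl
  intro n
  induction n with
  | zero =>
    intro a ha hle
    exfalso
    have hmem : a ∈ (Submodule.span A {a}).restrictScalars k := by
      rw [Submodule.restrictScalars_mem]
      exact Submodule.mem_span_singleton_self a
    have : 0 < Module.finrank k ((Submodule.span A {a}).restrictScalars k) :=
      Module.finrank_pos_iff.mpr ⟨⟨a, hmem⟩, 0, by simpa using ha⟩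
    omega
  | succ n ih =>
    intro a ha hle
    by_cases hkill : ∀ x : A, ¬ IsUnit x → x • a = 0
    · exact ⟨a, Submodule.mem_span_singleton_self a, ha, hkill⟩
    · push_neg at hkill
      obtain ⟨x, hxu, hxa⟩ := hkill
      have hle' : Submodule.span A {x • a} ≤ Submodule.span A {a} := by
        rw [Submodule.span_le, Set.singleton_subset_iff]
        exact Submodule.smul_mem _ x (Submodule.mem_span_singleton_self a)
      have hlt : Submodule.span A {x • a} < Submodule.span A {a} := by
        refine lt_of_le_of_ne hle' fun heq => ?_
        have hmem : a ∈ Submodule.span A {x • a} := by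
          rw [heq]; exact Submodule.mem_span_singleton_self a
        obtain ⟨y, hy⟩ := Submodule.mem_span_singleton.mp hmem
        rw [← mul_smul] at hy
        have hyx : ¬ IsUnit (y * x) := fun h => hxu (aux_isUnit_of_mul h)
        have hunit : IsUnit (1 - y * x) := aux_isUnit_one_sub hyx
        obtain ⟨s, hs⟩ := hunit
        have hza : (1 - y * x) • a = 0 := by
          rw [sub_smul, one_smul, hy, sub_self]
        have : a = 0 := by
          calc a = ((↑s⁻¹ : A) * ↑s) • a := by
                    rw [← Units.val_mul, inv_mul_cancel, Units.val_one, one_smul]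
            _ = (↑s⁻¹ : A) • ((↑s : A) • a) := mul_smul _ _ _
            _ = 0 := by rw [hs, hza, smul_zero]
        exact ha this
      have hltk : (Submodule.span A {x • a}).restrictScalars k <
          (Submodule.span A {a}).restrictScalars k :=
        (Submodule.restrictScalarsEmbedding k A V).strictMono hlt
      have hfr : Module.finrank k ((Submodule.span A {x • a}).restrictScalars k) ≤ n := by
        have := Submodule.finrank_lt_finrank_of_lt hltk
        omega
      obtain ⟨b, hb, hb0, hbk⟩ := ih (x • a) hxa hfr
      exact ⟨b, hle' hb, hb0, hbk⟩

end Aux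

/-- Let `A` be a finite-dimensional local self-injective `k`-algebra whose socle
(the set of elements killed by all nonunits) is one-dimensional, spanned by `u`,
and assume every projective `A`-module is free.  If `M` is a finitely generated
`A`-module with `dim_k (u • M) = r`, then `M ≅ A^r ⊕ N` where `u • N = 0`. -/
theorem stmt_1 (k : Type) [Field k] (A : Type) [Ring A] [Algebra k A]
    [FiniteDimensional k A] [IsLocalRing A]
    (hselfinj : Module.Injective A A)
    (u : A) (hu : u ≠ 0)
    (hsocle : ∀ x : A, (∀ a : A, ¬ IsUnit a → a * x = 0) ↔ ∃ c : k, x = c • u)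
    (hprojfree : ∀ (P : Type) [AddCommGroup P] [Module A P],
      Module.Projective A P → Module.Free A P)
    (M : Type) [AddCommGroup M] [Module A M] [Module k M] [IsScalarTower k A M]
    [Module.Finite A M] (r : ℕ)
    (hr : Module.finrank k (Submodule.span k (Set.range fun m : M => u • m)) = r) :
    ∃ (N : Type) (_ : AddCommGroup N) (_ : Module A N),
      (∀ x : N, u • x = 0) ∧ Nonempty (M ≃ₗ[A] (Fin r → A) × N) := by
  classical
  have hMfin : Module.Finite k M := Module.Finite.trans A M
  -- the `k`-linear map `m ↦ u • m`
  have hcomm : ∀ (c : k) (m : M), u • (c • m) = c • (u • m) := by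
    intro c m
    calc u • (c • m) = u • ((algebraMap k A c) • m) := by rw [algebraMap_smul]
      _ = (u * algebraMap k A c) • m := (mul_smul _ _ _).symm
      _ = (algebraMap k A c * u) • m := by rw [← Algebra.commutes]
      _ = (algebraMap k A c) • (u • m) := mul_smul _ _ _
      _ = c • (u • m) := algebraMap_smul _ _ _
  set ℓ : M →ₗ[k] M :=
    { toFun := fun m => u • m
      map_add' := fun m₁ m₂ => smul_add u m₁ m₂
      map_smul' := fun c m => hcomm c m } with hℓ
  set S : Submodule k M := Submodule.span k (Set.range fun m : M => u • m) with hSdef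
  have hS : S = LinearMap.range ℓ := by
    have h1 : (Set.range fun m : M => u • m) = ↑(LinearMap.range ℓ) := by
      rw [LinearMap.coe_range]; rfl
    rw [hSdef, h1, Submodule.span_eq]
  -- a basis of S indexed by `Fin r`
  have hSr : Module.finrank k S = r := hr
  let v : Module.Basis (Fin r) k S := Module.finBasisOfFinrankEq k S hSr
  -- choose preimages
  have hpre : ∀ i : Fin r, ∃ m : M, u • m = (v i : M) := by
    intro i
    have h2 : (v i : M) ∈ LinearMap.range ℓ := hS.le (v i).2
    obtain ⟨m, hm⟩ := h2
    exact ⟨m, hm⟩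
  choose m_ hm_ using hpre
  -- the map φ : A^r → M
  set φ : (Fin r → A) →ₗ[A] M :=
    { toFun := fun a => ∑ i, a i • m_ i
      map_add' := fun a b => by
        simp only [Pi.add_apply, add_smul, Finset.sum_add_distrib]
      map_smul' := fun c a => by
        simp only [Pi.smul_apply, smul_eq_mul, mul_smul, RingHom.id_apply, Finset.smul_sum] }
    with hφdef
  have hφ_apply : ∀ a : Fin r → A, φ a = ∑ i, a i • m_ i := fun a => rfl
  -- linear independence of the `u • m_ i`
  have hli : LinearIndependent k (fun i => (v i : M)) :=
    v.linearIndependent.map' S.subtype S.ker_subtype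
  have hkey : ∀ c : Fin r → k, ∑ i, (c i • u) • m_ i = 0 → ∀ i, c i = 0 := by
    intro c hc
    have h2 : ∑ i, c i • (v i : M) = 0 := by
      rw [← hc]
      refine Finset.sum_congr rfl fun i _ => ?_
      rw [← hm_ i, smul_assoc]
    exact Fintype.linearIndependent_iff.mp hli c h2
  -- injectivity of φ
  have hinj : Function.Injective φ := by
    rw [← LinearMap.ker_eq_bot]
    by_contra hne
    obtain ⟨a, haker, ha0⟩ := Submodule.exists_mem_ne_zero_of_ne_bot hne
    obtain ⟨b, hbmem, hb0, hbk⟩ := aux_socle (k := k) (A := A) (Fin r → A) a ha0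
    have hbker : b ∈ LinearMap.ker φ := by
      have : Submodule.span A {a} ≤ LinearMap.ker φ := by
        rw [Submodule.span_le, Set.singleton_subset_iff]; exact haker
      exact this hbmem
    have hbsoc : ∀ i : Fin r, ∃ c : k, b i = c • u := by
      intro i
      refine (hsocle (b i)).mp fun x hx => ?_
      have := hbk x hx
      have h3 : (x • b) i = 0 := by rw [this]; rfl
      simpa [Pi.smul_apply, smul_eq_mul] using h3
    choose c hc using hbsoc
    have hφb : φ b = 0 := hbker
    rw [hφ_apply] at hφb
    have hφb' : ∑ i, (c i • u) • m_ i = 0 := by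
      rw [← hφb]
      exact Finset.sum_congr rfl fun i _ => by rw [← hc i]
    have hcall : ∀ i, c i = 0 := hkey c hφb'
    apply hb0
    funext i
    rw [hc i, hcall i, zero_smul]
    rfl
  -- a retraction ρ : M → A^r
  obtain ⟨ρ, hρ⟩ : ∃ ρ : M →ₗ[A] (Fin r → A), ∀ a, ρ (φ a) = a := by
    have hext := fun i : Fin r =>
      hselfinj.out φ hinj (LinearMap.proj i : (Fin r → A) →ₗ[A] A)
    choose h hh using hext
    exact ⟨LinearMap.pi h, fun a => funext fun i => hh i a⟩
  -- every `u • m` lies in the range of φ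
  have huM : ∀ m : M, u • m ∈ LinearMap.range φ := by
    intro m
    have hmem : u • m ∈ S := Submodule.subset_span ⟨m, rfl⟩
    have hrepr := v.sum_repr ⟨u • m, hmem⟩
    have h := congrArg (Subtype.val : S → M) hrepr
    simp only [AddSubmonoidClass.coe_finset_sum, SetLike.val_smul] at h
    refine ⟨fun i => v.repr ⟨u • m, hmem⟩ i • u, ?_⟩
    rw [hφ_apply]
    calc ∑ i, (v.repr ⟨u • m, hmem⟩ i • u) • m_ i
        = ∑ i, v.repr ⟨u • m, hmem⟩ i • (v i : M) :=
          Finset.sum_congr rfl fun i _ => by rw [smul_assoc, hm_ i]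
      _ = u • m := h
  -- the complement
  have hcompl : IsCompl (LinearMap.range φ) (LinearMap.ker ρ) := by
    constructor
    · rw [disjoint_iff]
      ext x
      simp only [Submodule.mem_inf, Submodule.mem_bot, LinearMap.mem_range,
        LinearMap.mem_ker]
      constructor
      · rintro ⟨⟨a, rfl⟩, hker⟩
        rw [hρ a] at hker
        rw [hker]
        exact map_zero φ
      · rintro rfl
        exact ⟨⟨0, map_zero φ⟩, map_zero ρ⟩
    · rw [codisjoint_iff, eq_top_iff]
      intro m _
      have hdecomp : m = φ (ρ m) + (m - φ (ρ m)) := by abel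
      rw [hdecomp]
      exact Submodule.add_mem_sup ⟨ρ m, rfl⟩
        (by rw [LinearMap.mem_ker, map_sub, hρ, sub_self])
  -- the kernel of ρ is killed by u
  refine ⟨↥(LinearMap.ker ρ), inferInstance, inferInstance, ?_, ?_⟩
  · intro x
    obtain ⟨a, ha⟩ := huM (x : M)
    have ha0 : a = 0 := by
      have h1 : ρ (u • (x : M)) = 0 := by
        rw [map_smul, x.2, smul_zero]
      rw [← ha, hρ] at h1
      exact h1
    have : u • (x : M) = 0 := by rw [← ha, ha0, map_zero]
    exact Subtype.ext this
  · exact ⟨((Submodule.prodEquivOfIsCompl _ _ hcompl).symm.trans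
      (((LinearEquiv.ofInjective φ hinj).symm.prodCongr
        (LinearEquiv.refl A ↥(LinearMap.ker ρ)))))⟩
end

section
/- Let A be an associative k-algebra generated by u_1, …, u_n (n > 1) such that u_i^p = 0 for all i, the image of u_i is central in A/I_i where I_i is the two-sided ideal generated by u_{i+1}, …, u_n, u_n is central in A, and dim_k A = p^n. Then the set of ordered monomials { u_1^{i_1} u_2^{i_2} ⋯ u_n^{i_n} : 0 ≤ i_j < p } is a k-basis of A. -/
section PBWAux

variable {A : Type} [Ring A] {n : ℕ} (u : Fin n → A)

/-- The two-sided ideal generated by the generators with index `≥ i`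
(realized as a left ideal over a right-closed generating set). -/
private def pbwJ (i : ℕ) : Ideal A :=
  Ideal.span {x : A | ∃ (l : Fin n) (b : A), i ≤ (l : ℕ) ∧ x = u l * b}

/-- The ordered monomial with exponent vector `e`. -/
private def pbwP (e : Fin n → ℕ) : A :=
  ((List.finRange n).map fun j => u j ^ e j).prod

/-- Truncated ordered monomial: product over the first `i` generators. -/
private def pbwQ (i : ℕ) (e : Fin n → ℕ) : A :=
  (((List.finRange n).take i).map fun j => u j ^ e j).prod

private lemma pbwJ_mem (i : ℕ) (l : Fin n) (b : A) (h : i ≤ (l : ℕ)) :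
    u l * b ∈ pbwJ u i :=
  Ideal.subset_span ⟨l, b, h, rfl⟩

private lemma pbwJ_mul_right (i : ℕ) {x : A} (c : A) (hx : x ∈ pbwJ u i) :
    x * c ∈ pbwJ u i := by
  induction hx using Submodule.span_induction with
  | mem x hx =>
    obtain ⟨l, b, hl, rfl⟩ := hx
    rw [mul_assoc]
    exact pbwJ_mem u i l (b * c) hl
  | zero => rw [zero_mul]; exact zero_mem _
  | add x y _ _ hx hy => rw [add_mul]; exact add_mem hx hy
  | smul r x _ hx => rw [smul_mul_assoc]; exact Submodule.smul_mem _ r hx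

private lemma pbwP_eq_pbwQ (i : ℕ) (e : Fin n → ℕ)
    (h : ∀ j : Fin n, i ≤ (j : ℕ) → e j = 0) : pbwP u e = pbwQ u i e := by
  have hsplit : pbwP u e
      = pbwQ u i e * (((List.finRange n).drop i).map fun j => u j ^ e j).prod := by
    rw [pbwQ, ← List.prod_append, ← List.map_append, List.take_append_drop, pbwP]
  have hone : (((List.finRange n).drop i).map fun j => u j ^ e j).prod = 1 := by
    apply List.prod_eq_one
    intro x hx
    obtain ⟨j, hj, rfl⟩ := List.mem_map.1 hx
    obtain ⟨m, hm, hget⟩ := List.mem_iff_getElem.1 hj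
    rw [List.getElem_drop] at hget
    have hij : i ≤ (j : ℕ) := by
      rw [List.getElem_finRange] at hget
      rw [← hget]
      simp
    rw [h j hij, pow_zero]
  rw [hsplit, hone, mul_one]

private lemma pbwQ_succ (i : ℕ) (hi : i < n) (e : Fin n → ℕ) :
    pbwQ u (i + 1) e = pbwQ u i e * u ⟨i, hi⟩ ^ e ⟨i, hi⟩ := by
  have hlen : i < (List.finRange n).length := by simpa using hi
  rw [pbwQ, List.take_succ, List.getElem?_eq_getElem hlen]
  rw [List.map_append, List.prod_append]
  congr 1
  rw [List.getElem_finRange]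
  simp [pbwQ]

private lemma pbwQ_congr (i : ℕ) (e e' : Fin n → ℕ)
    (h : ∀ j : Fin n, (j : ℕ) < i → e j = e' j) : pbwQ u i e = pbwQ u i e' := by
  unfold pbwQ
  congr 1
  apply List.map_congr_left
  intro j hj
  obtain ⟨m, hm, hget⟩ := List.mem_iff_getElem.1 hj
  have hmi : m < i := by
    have := hm
    simp [List.length_take] at this
    omega
  rw [List.getElem_take, List.getElem_finRange] at hget
  have hjv : (j : ℕ) < i := by rw [← hget]; simpa using hmi
  rw [h j hjv]

private lemma pbwP_mul_pow (i : ℕ) (hi : i < n) (e : Fin n → ℕ) (s : ℕ)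
    (hsupp : ∀ j : Fin n, i ≤ (j : ℕ) → e j = 0) :
    pbwP u e * u ⟨i, hi⟩ ^ s = pbwP u (Function.update e ⟨i, hi⟩ s) := by
  have h1 : pbwP u e = pbwQ u i e := pbwP_eq_pbwQ u i e hsupp
  have h2 : pbwP u (Function.update e ⟨i, hi⟩ s) = pbwQ u (i+1) (Function.update e ⟨i, hi⟩ s) := by
    apply pbwP_eq_pbwQ
    intro j hj
    rw [Function.update_of_ne (by
      intro hjeq
      rw [hjeq] at hj
      exact absurd hj (by simp))]
    exact hsupp j (by omega)
  rw [h1, h2, pbwQ_succ u i hi, Function.update_self]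
  congr 1
  apply pbwQ_congr
  intro j hj
  rw [Function.update_of_ne (by
    intro hjeq
    rw [hjeq] at hj
    exact absurd hj (by simp))]

end PBWAux

/-- PBW-type basis: if `A` is a `k`-algebra generated by `u 0, …, u (n-1)` (`n > 1`)
with `(u i)^p = 0`, `u i` central modulo the two-sided ideal generated by the
later generators, `u (n-1)` central, and `dim_k A = p^n`, then the ordered
monomials `u 0^{i_0} ⋯ u (n-1)^{i_{n-1}}` with `0 ≤ i_j < p` form a `k`-basis. -/
theorem stmt_3 (k : Type) [Field k] (p : ℕ) [Fact p.Prime] [CharP k p]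
    (A : Type) [Ring A] [Algebra k A] (n : ℕ) (hn : 1 < n) (u : Fin n → A)
    (hgen : Algebra.adjoin k (Set.range u) = ⊤)
    (hpow : ∀ i, u i ^ p = 0)
    (hcentral : ∀ i : Fin n, ∀ a : A,
      u i * a - a * u i ∈ Ideal.span {x : A | ∃ j : Fin n, ∃ b : A, i < j ∧ x = u j * b})
    (hlast : ∀ a : A, u (Fin.last (n - 1) |>.cast (by omega)) * a
        = a * u (Fin.last (n - 1) |>.cast (by omega)))
    (hdim : Module.finrank k A = p ^ n) :
    LinearIndependent k
        (fun f : Fin n → Fin p =>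
          ((List.finRange n).map fun i => u i ^ (f i : ℕ)).prod) ∧
    Submodule.span k
        (Set.range fun f : Fin n → Fin p =>
          ((List.finRange n).map fun i => u i ^ (f i : ℕ)).prod) = ⊤ := by
  classical
  have hppos : 0 < p := (Fact.out : p.Prime).pos
  -- W i : span of ordered monomials supported on indices < i, exponents < p
  let W : ℕ → Submodule k A := fun i => Submodule.span k
    {x : A | ∃ e : Fin n → ℕ, (∀ j, e j < p) ∧ (∀ j : Fin n, i ≤ (j : ℕ) → e j = 0) ∧ x = pbwP u e}
  have hWmem : ∀ (i : ℕ) (e : Fin n → ℕ), (∀ j, e j < p) → (∀ j : Fin n, i ≤ (j : ℕ) → e j = 0) →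
      pbwP u e ∈ W i := fun i e h1 h2 => Submodule.subset_span ⟨e, h1, h2, rfl⟩
  have hWmono : ∀ i i' : ℕ, i ≤ i' → W i ≤ W i' := by
    intro i i' hii
    apply Submodule.span_mono
    rintro x ⟨e, h1, h2, rfl⟩
    exact ⟨e, h1, fun j hj => h2 j (by omega), rfl⟩
  -- commutation: u t commutes modulo pbwJ (t+1)
  have hcomm : ∀ (t : Fin n) (a : A), u t * a - a * u t ∈ pbwJ u ((t : ℕ) + 1) := by
    intro t a
    refine Ideal.span_mono ?_ (hcentral t a)
    rintro x ⟨j, b, hj, rfl⟩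
    rw [Fin.lt_def] at hj
    exact ⟨j, b, by omega, rfl⟩
  -- powers ≥ p vanish
  have hupow : ∀ (t : Fin n) (e : ℕ), p ≤ e → u t ^ e = 0 := by
    intro t e he
    have h : e = p + (e - p) := by omega
    rw [h, pow_add, hpow, zero_mul]
  -- the main induction
  have main : ∀ i, i ≤ n → ∀ a : A, a ∈ W i ⊔ (pbwJ u i).restrictScalars k := by
    intro i
    induction i with
    | zero =>
      intro _ a
      have h0 : a ∈ Subalgebra.toSubmodule (Algebra.adjoin k (Set.range u)) := by
        rw [hgen]
        exact (Subalgebra.mem_toSubmodule ⊤).mpr Algebra.mem_top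
      rw [Algebra.adjoin_eq_span] at h0
      induction h0 using Submodule.span_induction with
      | mem x hx =>
        obtain ⟨l, hl, rfl⟩ := Submonoid.exists_list_of_mem_closure hx
        cases l with
        | nil =>
          apply Submodule.mem_sup_left
          have h1 : (List.nil : List A).prod = pbwP u (fun _ => 0) := by
            simp [pbwP]
          rw [h1]
          exact hWmem 0 _ (fun j => hppos) (fun j _ => rfl)
        | cons y t =>
          obtain ⟨l0, rfl⟩ := hl y List.mem_cons_self
          apply Submodule.mem_sup_right
          show u l0 * t.prod ∈ pbwJ u 0
          exact pbwJ_mem u 0 l0 t.prod (Nat.zero_le _)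
      | zero => exact zero_mem _
      | add x y _ _ hx hy => exact add_mem hx hy
      | smul r x _ hx => exact Submodule.smul_mem _ r hx
    | succ i ih =>
      intro hin a
      have hi : i < n := by omega
      have ihi := ih (by omega)
      set t : Fin n := ⟨i, hi⟩ with ht
      have htval : (t : ℕ) = i := rfl
      set T : Submodule k A := W (i+1) ⊔ (pbwJ u (i+1)).restrictScalars k with hT
      have habs : ∀ x : A, x ∈ pbwJ u (i+1) → x ∈ T := fun x hx =>
        Submodule.mem_sup_right (show x ∈ (pbwJ u (i+1)).restrictScalars k from hx)
      -- the key claim: absorbing right multiplication by powers of u t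
      have claim : ∀ (m e : ℕ), p ≤ e + m → ∀ c : A, c * u t ^ e ∈ T := by
        intro m
        induction m with
        | zero =>
          intro e he c
          rw [hupow t e (by omega), mul_zero]
          exact zero_mem _
        | succ m ihm =>
          intro e he c
          by_cases hep : p ≤ e
          · rw [hupow t e hep, mul_zero]
            exact zero_mem _
          · have wlem : ∀ x : A, x ∈ W i → x * u t ^ e ∈ W (i+1) := by
              intro x hx
              induction hx using Submodule.span_induction with
              | mem x hx =>
                obtain ⟨e', hbound, hsupp, rfl⟩ := hx
                rw [pbwP_mul_pow u i hi e' e hsupp]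
                refine hWmem (i+1) _ ?_ ?_
                · intro j
                  by_cases hj : j = t
                  · rw [hj, Function.update_self]; omega
                  · rw [Function.update_of_ne hj]; exact hbound j
                · intro j hj
                  have hjt : j ≠ t := by
                    intro hjeq
                    rw [hjeq, htval] at hj
                    omega
                  rw [Function.update_of_ne hjt]
                  exact hsupp j (by omega)
              | zero => rw [zero_mul]; exact zero_mem _
              | add x y _ _ hx hy => rw [add_mul]; exact add_mem hx hy
              | smul r x _ hx => rw [smul_mul_assoc]; exact Submodule.smul_mem _ r hx
            obtain ⟨w, hw, d, hd, hwd⟩ := Submodule.mem_sup.1 (ihi c)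
            rw [← hwd, add_mul]
            refine add_mem (Submodule.mem_sup_left (wlem w hw)) ?_
            · -- ideal part
              have key : ∀ x : A, x ∈ pbwJ u i → ∀ c' : A, c' * x * u t ^ e ∈ T := by
                intro x hx
                induction hx using Submodule.span_induction with
                | mem x hx =>
                  intro c'
                  obtain ⟨l, b, hl, rfl⟩ := hx
                  by_cases hl' : i + 1 ≤ (l : ℕ)
                  · apply habs
                    have hre : c' * (u l * b) * u t ^ e = c' * (u l * (b * u t ^ e)) := by
                      rw [mul_assoc, mul_assoc]
                    rw [hre]
                    exact Ideal.mul_mem_left _ c' (pbwJ_mem u (i+1) l _ hl')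
                  · have hlval : l = t := Fin.ext (by omega)
                    rw [hlval]
                    have hsplit : c' * (u t * b) * u t ^ e
                        = (c' * b) * u t ^ (e + 1) + (c' * (u t * b - b * u t)) * u t ^ e := by
                      have h2 : (c' * b) * u t ^ (e + 1) = (c' * (b * u t)) * u t ^ e := by
                        rw [pow_succ', ← mul_assoc, mul_assoc c' b (u t)]
                      rw [h2, ← add_mul, ← mul_add]
                      congr 2
                      abel
                    rw [hsplit]
                    refine add_mem (ihm (e+1) (by omega) (c' * b)) (habs _ ?_)
                    exact pbwJ_mul_right u (i+1) _ (Ideal.mul_mem_left _ c' (hcomm t b))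
                | zero =>
                  intro c'
                  rw [mul_zero, zero_mul]
                  exact zero_mem _
                | add x y _ _ hx hy =>
                  intro c'
                  rw [mul_add, add_mul]
                  exact add_mem (hx c') (hy c')
                | smul r x _ hx =>
                  intro c'
                  rw [smul_eq_mul, ← mul_assoc]
                  exact hx (c' * r)
              have := key d hd 1
              rwa [one_mul] at this
      -- conclude the step
      obtain ⟨w, hw, d, hd, hwd⟩ := Submodule.mem_sup.1 (ihi a)
      rw [← hwd]
      refine add_mem (Submodule.mem_sup_left (hWmono i (i+1) (by omega) hw)) ?_
      have key2 : ∀ x : A, x ∈ pbwJ u i → ∀ c : A, c * x ∈ T := by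
        intro x hx
        induction hx using Submodule.span_induction with
        | mem x hx =>
          intro c
          obtain ⟨l, b, hl, rfl⟩ := hx
          by_cases hl' : i + 1 ≤ (l : ℕ)
          · exact habs _ (Ideal.mul_mem_left _ c (pbwJ_mem u (i+1) l b hl'))
          · have hlval : l = t := Fin.ext (by omega)
            rw [hlval]
            have h1 : c * (u t * b) = (c * b) * u t ^ 1 + c * (u t * b - b * u t) := by
              rw [pow_one, mul_sub, mul_assoc c b (u t), ← mul_assoc c (u t) b]
              abel
            rw [h1]
            exact add_mem (claim p 1 (by omega) (c * b))
              (habs _ (Ideal.mul_mem_left _ c (hcomm t b)))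
        | zero =>
          intro c
          rw [mul_zero]
          exact zero_mem _
        | add x y _ _ hx hy =>
          intro c
          rw [mul_add]
          exact add_mem (hx c) (hy c)
        | smul r x _ hx =>
          intro c
          rw [smul_eq_mul, ← mul_assoc]
          exact hx (c * r)
      have := key2 d hd 1
      rwa [one_mul] at this
  -- everything lies in W n
  have hJn : pbwJ u n = ⊥ := by
    rw [pbwJ, Ideal.span_eq_bot]
    rintro x ⟨l, b, hl, rfl⟩
    exact absurd l.isLt (by omega)
  have hfin : ∀ a : A, a ∈ W n := by
    intro a
    obtain ⟨w, hw, d, hd, hwd⟩ := Submodule.mem_sup.1 (main n le_rfl a)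
    have hdz : d = 0 := by
      have hd' : d ∈ pbwJ u n := hd
      rw [hJn] at hd'
      simpa using hd'
    rw [← hwd, hdz, add_zero]
    exact hw
  -- span = ⊤
  have hspan : Submodule.span k
      (Set.range fun f : Fin n → Fin p =>
        ((List.finRange n).map fun i => u i ^ (f i : ℕ)).prod) = ⊤ := by
    rw [eq_top_iff]
    intro a _
    have ha := hfin a
    refine Submodule.span_le.2 ?_ ha
    rintro x ⟨e, hb, _, rfl⟩
    exact Submodule.subset_span ⟨fun j => ⟨e j, hb j⟩, rfl⟩
  refine ⟨?_, hspan⟩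
  apply linearIndependent_of_top_le_span_of_card_eq_finrank (le_of_eq hspan.symm)
  rw [hdim]
  simp [Fintype.card_fun]
end

section
/- With A as in the PBW setting (generators u_1,…,u_n satisfying Hypothesis 1), for any s = 1, …, n, the left ideal J_s = A u_s + ⋯ + A u_n is a two-sided ideal, and J_s · (u_s^{p-1} u_{s+1}^{p-1} ⋯ u_n^{p-1}) = 0; i.e., x · u_s^{p-1} ⋯ u_n^{p-1} = 0 for every x ∈ J_s. -/
/-- With `A` as in the PBW setting, for any `s`, the left ideal
`J_s = A u_s + ⋯ + A u_{n-1}` is a two-sided ideal, and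
`x * u_s^{p-1} * ⋯ * u_{n-1}^{p-1} = 0` for every `x ∈ J_s`. -/
theorem stmt_4 (k : Type) [Field k] (p : ℕ) [Fact p.Prime] [CharP k p]
    (A : Type) [Ring A] [Algebra k A] (n : ℕ) (hn : 1 < n) (u : Fin n → A)
    (hgen : Algebra.adjoin k (Set.range u) = ⊤)
    (hpow : ∀ i, u i ^ p = 0)
    (hcentral : ∀ i : Fin n, ∀ a : A,
      u i * a - a * u i ∈ Ideal.span {x : A | ∃ j : Fin n, ∃ b : A, i < j ∧ x = u j * b})
    (hlast : ∀ a : A, u ⟨n - 1, by omega⟩ * a = a * u ⟨n - 1, by omega⟩)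
    (hdim : Module.finrank k A = p ^ n)
    (s : Fin n) :
    ∀ x ∈ Ideal.span (u '' {j : Fin n | s ≤ j}),
      (∀ a : A, x * a ∈ Ideal.span (u '' {j : Fin n | s ≤ j})) ∧
      x * (((List.finRange n).drop (s : ℕ)).map fun j => u j ^ (p - 1)).prod = 0 := by
  set J : Fin n → Ideal A := fun t => Ideal.span (u '' {j : Fin n | t ≤ j}) with hJ
  set P : Fin n → A :=
    fun t => (((List.finRange n).drop (t : ℕ)).map fun j => u j ^ (p - 1)).prod with hPdef
  have memJ : ∀ t j : Fin n, t ≤ j → u j ∈ J t := by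
    intro t j h
    exact Ideal.subset_span ⟨j, h, rfl⟩
  have mono : ∀ t t' : Fin n, t ≤ t' → J t' ≤ J t := by
    intro t t' h
    apply Ideal.span_mono
    apply Set.image_mono
    intro j hj
    exact le_trans h hj
  -- P recursion
  have hPrec : ∀ t : Fin n, P t =
      u t ^ (p - 1) * (((List.finRange n).drop ((t : ℕ) + 1)).map fun j => u j ^ (p - 1)).prod := by
    intro t
    have hlen : (t : ℕ) < (List.finRange n).length := by simp [t.isLt]
    simp only [hPdef]
    rw [List.drop_eq_getElem_cons hlen, List.map_cons, List.prod_cons, List.getElem_finRange]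
    congr 2
  -- main downward induction
  have key : ∀ m : ℕ, ∀ t : Fin n, n - 1 - (t : ℕ) = m →
      ∀ x ∈ J t, (∀ a : A, x * a ∈ J t) ∧ x * P t = 0 := by
    intro m
    induction m using Nat.strong_induction_on with
    | _ m IH =>
      intro t ht
      -- commutators of generators land in J t
      have comm_mem : ∀ j : Fin n, t ≤ j → ∀ a : A, u j * a - a * u j ∈ J t := by
        intro j hj a
        by_cases hje : (j : ℕ) = n - 1
        · have : u j = u ⟨n - 1, by omega⟩ := congrArg u (Fin.ext hje)
          rw [this, hlast a, sub_self]
          exact (J t).zero_mem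
        · have hj1 : (j : ℕ) + 1 < n := by have := j.isLt; omega
          have hts : (t : ℕ) < n - 1 := by
            have := Fin.le_def.mp hj; omega
          have hlt : n - 1 - ((j : ℕ) + 1) < m := by omega
          have hsub : Ideal.span {x : A | ∃ l : Fin n, ∃ b : A, j < l ∧ x = u l * b}
              ≤ J ⟨(j : ℕ) + 1, hj1⟩ := by
            apply Ideal.span_le.mpr
            rintro x ⟨l, b, hl, rfl⟩
            have hul : u l ∈ J ⟨(j : ℕ) + 1, hj1⟩ :=
              memJ _ l (by simpa [Fin.le_def] using Fin.lt_def.mp hl)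
            exact (IH _ hlt ⟨(j : ℕ) + 1, hj1⟩ rfl (u l) hul).1 b
          have hle : J ⟨(j : ℕ) + 1, hj1⟩ ≤ J t :=
            mono _ _ (by simp [Fin.le_def]; have := Fin.le_def.mp hj; omega)
          exact hle (hsub (hcentral j a))
      -- right stability
      have stable : ∀ x ∈ J t, ∀ a : A, x * a ∈ J t := by
        intro x hx
        induction hx using Submodule.span_induction with
        | mem y hy =>
          rcases hy with ⟨j, hj, rfl⟩
          intro a
          have : u j * a = a * u j + (u j * a - a * u j) := by abel
          rw [this]
          exact (J t).add_mem ((J t).mul_mem_left a (memJ t j hj)) (comm_mem j hj a)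
        | zero => intro a; simpa using (J t).zero_mem
        | add y z _ _ hy hz => intro a; rw [add_mul]; exact (J t).add_mem (hy a) (hz a)
        | smul c y _ hy =>
          intro a
          rw [smul_eq_mul, mul_assoc]
          exact (J t).mul_mem_left c (hy a)
      -- annihilation
      have annih : ∀ x ∈ J t, x * P t = 0 := by
        intro x hx
        induction hx using Submodule.span_induction with
        | mem y hy =>
          rcases hy with ⟨j, hj, rfl⟩
          rw [hPrec t]
          by_cases hjt : j = t
          · subst hjt
            rw [← mul_assoc, ← pow_succ']
            have hp : p - 1 + 1 = p := Nat.succ_pred_eq_of_pos (Fact.out : p.Prime).pos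
            rw [hp, hpow, zero_mul]
          · have hjt' : (t : ℕ) < (j : ℕ) := by
              have h1 := Fin.le_def.mp hj
              have h2 : (t : ℕ) ≠ (j : ℕ) := fun h => hjt (Fin.ext h.symm)
              omega
            have ht1 : (t : ℕ) + 1 < n := by have := j.isLt; omega
            set t' : Fin n := ⟨(t : ℕ) + 1, ht1⟩ with ht'
            have hlt : n - 1 - ((t : ℕ) + 1) < m := by have := j.isLt; omega
            have huj : u j ∈ J t' := memJ t' j (by simp [ht', Fin.le_def]; omega)
            have hmem : u j * u t ^ (p - 1) ∈ J t' :=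
              (IH _ hlt t' rfl (u j) huj).1 (u t ^ (p - 1))
            have hz := (IH _ hlt t' rfl _ hmem).2
            rw [← mul_assoc]
            simpa [hPdef, ht'] using hz
        | zero => simp
        | add y z _ _ hy hz => rw [add_mul, hy, hz, add_zero]
        | smul c y _ hy => rw [smul_eq_mul, mul_assoc, hy, mul_zero]
      exact fun x hx => ⟨stable x hx, annih x hx⟩
  exact key (n - 1 - (s : ℕ)) s rfl
end

section
/- The restriction of the Weyl module V(n·p^r) of SL_2 to the r-th Frobenius kernel of its unipotent radical decomposes as V(n·p^r)|_{U_r} ≅ k ⊕ (kU_r)^{⊕ n}: equivalently, in the module S^{np^r}(W) with divided power action as above, the map from a free kU_r-module Q of rank n sending the i-th generator to w_{(i-1)p^r} is an injective split kU_r-homomorphism whose image has codimension 1, with complement the trivial module. -/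
open Finset

private lemma lucas_one (p : ℕ) [Fact p.Prime] :
    ∀ (r m j : ℕ), j < p ^ r → Nat.choose (m * p ^ r + j) j ≡ 1 [MOD p] := by
  intro r
  induction r with
  | zero =>
    intro m j hj
    rw [pow_zero] at hj
    interval_cases j
    simp [Nat.ModEq.refl]
  | succ r ih =>
    intro m j hj
    have hp : 0 < p := (Fact.out : p.Prime).pos
    have h1 : (m * p ^ (r + 1) + j) % p = j % p := by
      rw [pow_succ, ← mul_assoc, mul_comm (m * p ^ r) p, Nat.mul_add_mod]
    have h2 : (m * p ^ (r + 1) + j) / p = m * p ^ r + j / p := by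
      rw [pow_succ, ← mul_assoc, mul_comm (m * p ^ r) p, Nat.mul_add_div hp]
    have h3 : j / p < p ^ r := by
      rw [Nat.div_lt_iff_lt_mul hp, ← pow_succ]; exact hj
    calc Nat.choose (m * p ^ (r + 1) + j) j
        ≡ Nat.choose ((m * p ^ (r + 1) + j) % p) (j % p) *
          Nat.choose ((m * p ^ (r + 1) + j) / p) (j / p) [MOD p] :=
          Choose.choose_modEq_choose_mod_mul_choose_div_nat
      _ = Nat.choose (m * p ^ r + j / p) (j / p) := by
          rw [h1, h2, Nat.choose_self, one_mul]
      _ ≡ 1 [MOD p] := ih m (j / p) h3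

/-- `V(n·p^r)|_{U_r} ≅ k ⊕ (kU_r)^{⊕n}`: with `A = kU_r` the divided power
algebra (basis `e i`, `i < p^r`) and `V = V(np^r)` with basis `w 0, …, w (np^r)`
and action `e j • w t = C(t+j, j) • w (t+j)`, the `A`-linear map `ψ` from a free
module of rank `n` sending the `i`-th generator to `w (i·p^r)` is injective,
and its image has a complement spanned by a nonzero vector `v₀` on which all
`e j` (`j ≥ 1`) act by zero (the trivial module). -/
theorem stmt_11 (k : Type) [Field k] (p r n : ℕ) [Fact p.Prime] [CharP k p]
    (hr : 1 ≤ r) (hn : 1 ≤ n)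
    (A : Type) [Ring A] [Algebra k A] (e : ℕ → A)
    (h0 : e 0 = 1)
    (hmul : ∀ i j : ℕ, i + j < p ^ r →
      e i * e j = (Nat.choose (i + j) i : k) • e (i + j))
    (hmul' : ∀ i j : ℕ, i < p ^ r → j < p ^ r → p ^ r ≤ i + j → e i * e j = 0)
    (hbasisA : LinearIndependent k (fun i : Fin (p ^ r) => e i) ∧
      Submodule.span k (Set.range fun i : Fin (p ^ r) => e i) = ⊤)
    (V : Type) [AddCommGroup V] [Module A V] [Module k V] [IsScalarTower k A V]
    (w : ℕ → V)
    (hbasisV : LinearIndependent k (fun t : Fin (n * p ^ r + 1) => w t) ∧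
      Submodule.span k (Set.range fun t : Fin (n * p ^ r + 1) => w t) = ⊤)
    (haction : ∀ j t : ℕ, j < p ^ r → t ≤ n * p ^ r →
      (if t + j ≤ n * p ^ r then
        e j • w t = (Nat.choose (t + j) j : k) • w (t + j)
      else e j • w t = 0)) :
    ∃ ψ : (Fin n → A) →ₗ[A] V,
      Function.Injective ψ ∧
      (∀ i : Fin n, ψ (Pi.single i 1) = w ((i : ℕ) * p ^ r)) ∧
      ∃ v₀ : V, v₀ ≠ 0 ∧ (∀ j : ℕ, 1 ≤ j → j < p ^ r → e j • v₀ = 0) ∧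
        IsCompl (LinearMap.range ψ) (Submodule.span A {v₀}) := by
  obtain ⟨hAli, hAsp⟩ := hbasisA
  obtain ⟨hVli, hVsp⟩ := hbasisV
  have hp : 0 < p := (Fact.out : p.Prime).pos
  have hq0 : 0 < p ^ r := pow_pos hp r
  -- the relevant binomial coefficients are 1 in k
  have hC : ∀ m j : ℕ, j < p ^ r → ((Nat.choose (m * p ^ r + j) j : k)) = 1 := by
    intro m j hj
    have := (CharP.natCast_eq_natCast k p).mpr (lucas_one p r m j hj)
    simpa using this
  have hlt : ∀ i j : ℕ, i < n → j < p ^ r → i * p ^ r + j < n * p ^ r := by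
    intro i j hi hj
    calc i * p ^ r + j < i * p ^ r + p ^ r := by omega
      _ = (i + 1) * p ^ r := by ring
      _ ≤ n * p ^ r := Nat.mul_le_mul_right _ (by omega)
  have hEW : ∀ i j : ℕ, i < n → j < p ^ r → e j • w (i * p ^ r) = w (i * p ^ r + j) := by
    intro i j hi hj
    have hb := hlt i j hi hj
    have h := haction j (i * p ^ r) hj (by omega)
    rw [if_pos (by omega)] at h
    rw [h, hC i j hj, one_smul]
  have hEWN : ∀ j : ℕ, 1 ≤ j → j < p ^ r → e j • w (n * p ^ r) = 0 := by
    intro j hj1 hj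
    have h := haction j (n * p ^ r) hj le_rfl
    rw [if_neg (by omega)] at h
    exact h
  -- the map ψ
  let ψ : (Fin n → A) →ₗ[A] V :=
    { toFun := fun f => ∑ i : Fin n, f i • w ((i : ℕ) * p ^ r)
      map_add' := fun f g => by simp [add_smul, Finset.sum_add_distrib]
      map_smul' := fun a f => by simp [mul_smul, Finset.smul_sum] }
  have hψ_apply : ∀ f, ψ f = ∑ i : Fin n, f i • w ((i : ℕ) * p ^ r) := fun f => rfl
  have hψe : ∀ (i : Fin n) (j : ℕ), j < p ^ r →
      ψ (Pi.single i (e j)) = w ((i : ℕ) * p ^ r + j) := by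
    intro i j hj
    rw [hψ_apply, Finset.sum_eq_single i ?_ ?_]
    · rw [Pi.single_eq_same]; exact hEW i j i.isLt hj
    · intro b _ hb; rw [Pi.single_eq_of_ne hb, zero_smul]
    · intro h; exact absurd (Finset.mem_univ i) h
  have hψ1 : ∀ i : Fin n, ψ (Pi.single i 1) = w ((i : ℕ) * p ^ r) := by
    intro i
    have := hψe i 0 hq0
    rw [h0] at this
    simpa using this
  -- index decoding
  have hcode : ∀ a b c d : ℕ, b < p ^ r → d < p ^ r →
      a * p ^ r + b = c * p ^ r + d → a = c ∧ b = d := by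
    intro a b c d hb hd h
    have hb' : (a * p ^ r + b) % p ^ r = b := by
      rw [mul_comm a, Nat.mul_add_mod, Nat.mod_eq_of_lt hb]
    have hd' : (c * p ^ r + d) % p ^ r = d := by
      rw [mul_comm c, Nat.mul_add_mod, Nat.mod_eq_of_lt hd]
    have ha' : (a * p ^ r + b) / p ^ r = a := by
      rw [mul_comm, Nat.mul_add_div hq0, Nat.div_eq_of_lt hb, add_zero]
    have hc' : (c * p ^ r + d) / p ^ r = c := by
      rw [mul_comm, Nat.mul_add_div hq0, Nat.div_eq_of_lt hd, add_zero]
    exact ⟨by rw [← ha', ← hc', h], by rw [← hb', ← hd', h]⟩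
  let ι : Fin n × Fin (p ^ r) → Fin (n * p ^ r + 1) :=
    fun σ => ⟨(σ.1 : ℕ) * p ^ r + σ.2,
      by have := hlt σ.1 σ.2 σ.1.isLt σ.2.isLt; omega⟩
  have hι : Function.Injective ι := by
    intro σ τ hst
    have h : (σ.1 : ℕ) * p ^ r + σ.2 = (τ.1 : ℕ) * p ^ r + τ.2 :=
      congrArg Fin.val hst
    obtain ⟨h1, h2⟩ := hcode _ _ _ _ σ.2.isLt τ.2.isLt h
    exact Prod.ext (Fin.ext h1) (Fin.ext h2)
  have hwli : LinearIndependent k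
      (fun σ : Fin n × Fin (p ^ r) => w ((σ.1 : ℕ) * p ^ r + σ.2)) :=
    hVli.comp ι hι
  -- writing elements of A in the basis
  have hrepr : ∀ a : A, ∃ c : Fin (p ^ r) → k, ∑ j : Fin (p ^ r), c j • e j = a := by
    intro a
    have ha : a ∈ Submodule.span k (Set.range fun i : Fin (p ^ r) => e i) := by
      rw [hAsp]; trivial
    exact (Submodule.mem_span_range_iff_exists_fun k).mp ha
  have hψsum : ∀ (f : Fin n → A) (c : Fin n → Fin (p ^ r) → k),
      (∀ i, (∑ j : Fin (p ^ r), c i j • e j) = f i) →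
      ψ f = ∑ σ : Fin n × Fin (p ^ r), c σ.1 σ.2 • w ((σ.1 : ℕ) * p ^ r + (σ.2 : ℕ)) := by
    intro f c hc
    rw [hψ_apply, Fintype.sum_prod_type]
    refine Finset.sum_congr rfl fun i _ => ?_
    rw [← hc i, Finset.sum_smul]
    refine Finset.sum_congr rfl fun j _ => ?_
    rw [smul_assoc, hEW i j i.isLt j.isLt]
  -- injectivity
  have hker : ∀ f, ψ f = 0 → f = 0 := by
    intro f hf
    choose c hc using fun i => hrepr (f i)
    have hsum := hψsum f c hc
    rw [hf] at hsum
    have hz := (Fintype.linearIndependent_iff.mp hwli) (fun σ => c σ.1 σ.2) hsum.symm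
    funext i
    have hz' : ∀ j : Fin (p ^ r), c i j = 0 := fun j => hz (i, j)
    rw [Pi.zero_apply, ← hc i]
    simp [hz']
  have hinj : Function.Injective ψ := by
    intro f g hfg
    have : f - g = 0 := hker _ (by rw [map_sub, hfg, sub_self])
    exact sub_eq_zero.mp this
  -- basis of V
  let bV : Module.Basis (Fin (n * p ^ r + 1)) k V := Module.Basis.mk hVli hVsp.ge
  have hbV : ∀ t : Fin (n * p ^ r + 1), bV t = w t := fun t => Module.Basis.mk_apply _ _ _
  have hWlast : w (n * p ^ r) = bV (Fin.last (n * p ^ r)) := by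
    rw [hbV, Fin.val_last]
  -- nonzero vector
  have hv0 : w (n * p ^ r) ≠ 0 := hVli.ne_zero (Fin.last (n * p ^ r))
  -- disjointness
  have hdisj : Disjoint (LinearMap.range ψ) (Submodule.span A {w (n * p ^ r)}) := by
    rw [disjoint_iff, Submodule.eq_bot_iff]
    rintro x ⟨hxP, hxQ⟩
    obtain ⟨a, hax⟩ := Submodule.mem_span_singleton.mp hxQ
    obtain ⟨c, hca⟩ := hrepr a
    have hx' : x = c ⟨0, hq0⟩ • w (n * p ^ r) := by
      rw [← hax, ← hca, Finset.sum_smul,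
        Finset.sum_eq_single (⟨0, hq0⟩ : Fin (p ^ r)) ?_ ?_]
      · rw [smul_assoc]
        rw [show ((⟨0, hq0⟩ : Fin (p ^ r)) : ℕ) = 0 from rfl, h0, one_smul]
      · intro b _ hb
        have hb1 : 1 ≤ (b : ℕ) := by
          have : (b : ℕ) ≠ 0 := fun h => hb (Fin.ext h)
          omega
        rw [smul_assoc, hEWN b hb1 b.isLt, smul_zero]
      · intro h; exact absurd (Finset.mem_univ _) h
    obtain ⟨f, hfx⟩ := hxP
    choose cf hcf using fun i => hrepr (f i)
    have hsum := hψsum f cf hcf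
    have hxsum : x = ∑ σ : Fin n × Fin (p ^ r), cf σ.1 σ.2 • bV (ι σ) := by
      rw [← hfx, hsum]
      refine Finset.sum_congr rfl fun σ _ => ?_
      rw [hbV (ι σ)]
    have hre0 : bV.repr x (Fin.last (n * p ^ r)) = 0 := by
      rw [hxsum, map_sum]
      rw [Finsupp.finset_sum_apply]
      apply Finset.sum_eq_zero
      intro σ _
      rw [map_smul, Module.Basis.repr_self, Finsupp.smul_single, smul_eq_mul, mul_one,
        Finsupp.single_apply, if_neg, ]
      intro hEq
      have hv : (σ.1 : ℕ) * p ^ r + σ.2 = n * p ^ r := congrArg Fin.val hEq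
      have := hlt σ.1 σ.2 σ.1.isLt σ.2.isLt
      omega
    have hre1 : bV.repr x (Fin.last (n * p ^ r)) = c ⟨0, hq0⟩ := by
      rw [hx', hWlast, map_smul, Module.Basis.repr_self]
      simp
    rw [hx', hre1.symm.trans hre0, zero_smul]
  -- codisjointness
  have hcod : Codisjoint (LinearMap.range ψ) (Submodule.span A {w (n * p ^ r)}) := by
    rw [codisjoint_iff, eq_top_iff]
    intro x _
    have hx : x ∈ Submodule.span k (Set.range fun t : Fin (n * p ^ r + 1) => w t) := by
      rw [hVsp]; trivial
    have hle : Submodule.span k (Set.range fun t : Fin (n * p ^ r + 1) => w t) ≤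
        Submodule.restrictScalars k
          (LinearMap.range ψ ⊔ Submodule.span A {w (n * p ^ r)}) := by
      rw [Submodule.span_le]
      rintro y ⟨t, rfl⟩
      by_cases ht : (t : ℕ) < n * p ^ r
      · have hi : (t : ℕ) / p ^ r < n := by
          rw [Nat.div_lt_iff_lt_mul hq0]
          calc (t : ℕ) < n * p ^ r := ht
            _ = n * p ^ r := rfl
        have hj : (t : ℕ) % p ^ r < p ^ r := Nat.mod_lt _ hq0
        have hd : ((t : ℕ) / p ^ r) * p ^ r + (t : ℕ) % p ^ r = (t : ℕ) := by
          rw [mul_comm]; exact Nat.div_add_mod _ _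
        have hmem := hψe ⟨(t : ℕ) / p ^ r, hi⟩ ((t : ℕ) % p ^ r) hj
        exact Submodule.mem_sup_left
          ⟨Pi.single ⟨(t : ℕ) / p ^ r, hi⟩ (e ((t : ℕ) % p ^ r)), by rw [hmem, hd]⟩
      · have ht' : (t : ℕ) = n * p ^ r := by
          have := t.isLt; omega
        show w (t : ℕ) ∈ _
        rw [ht']
        exact Submodule.mem_sup_right (Submodule.mem_span_singleton_self _)
    exact hle hx
  exact ⟨ψ, hinj, hψ1, w (n * p ^ r), hv0, hEWN, ⟨hdisj, hcod⟩⟩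
end
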